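/- Let A be the 2×2 complex matrix with A_{1,2} = 1 and all other entries 0, regarded as an operator on ℂ² with the Euclidean norm. Then (i) for every λ ∈ ℂ with |λ| = r > 0, ‖(λI − A)^{−1}‖ = 1/(2r²) + √(1 + 1/(4r²)) / r; and (ii) for every t ≥ 0, ‖e^{At}‖ = t/2 + √(1 + t²/4}. -/

import Mathlib

lemma exp_aux (N : Matrix (Fin 2) (Fin 2) ℂ) (h : N ^ 2 = 0) :
    NormedSpace.exp N = 1 + N := by
  rw [NormedSpace.exp_eq_tsum ℂ]
  show ∑' n : ℕ, ((n.factorial : ℂ))⁻¹ • N ^ n = 1 + N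
  have hz : ∀ n ∉ Finset.range 2, (((n.factorial : ℂ))⁻¹ • N ^ n) = 0 := by
    intro n hn
    rw [Finset.mem_range, not_lt] at hn
    have hN : N ^ n = 0 := by
      have : N ^ n = N ^ 2 * N ^ (n - 2) := by rw [← pow_add]; congr 1; omega
      rw [this, h, zero_mul]
    rw [hN, smul_zero]
  rw [tsum_eq_sum hz]
  simp [Finset.sum_range_succ]

lemma inv_aux (lam : ℂ) (hlam : lam ≠ 0) :
    (lam • (1 : Matrix (Fin 2) (Fin 2) ℂ) - !![0, 1; 0, 0])⁻¹ =
      !![lam⁻¹, lam⁻¹ ^ 2; 0, lam⁻¹] := by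
  have hM : lam • (1 : Matrix (Fin 2) (Fin 2) ℂ) - !![0, 1; 0, 0] = !![lam, -1; 0, lam] := by
    ext i j
    fin_cases i <;> fin_cases j <;> simp [Matrix.one_apply]
  rw [hM]
  apply Matrix.inv_eq_right_inv
  ext i j
  fin_cases i <;> fin_cases j <;>
    simp [Matrix.mul_apply, Fin.sum_univ_two, Matrix.one_apply] <;> field_simp <;> ring

lemma apply_aux (a b : ℂ) (x : Fin 2 → ℂ) :
    Matrix.toEuclideanCLM (𝕜 := ℂ) (!![a, b; 0, a]) ((WithLp.equiv 2 _).symm x) =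
      (WithLp.equiv 2 _).symm ![a * x 0 + b * x 1, a * x 1] := by
  simp only [WithLp.equiv_symm_apply, Matrix.toEuclideanCLM_toLp]
  congr 1
  funext i
  fin_cases i <;> simp [Matrix.mulVec, Fin.sum_univ_two, Matrix.vecHead, Matrix.vecTail]

lemma norm_aux (x : Fin 2 → ℂ) :
    ‖(WithLp.equiv 2 (Fin 2 → ℂ)).symm x‖ =
      Real.sqrt (‖x 0‖ ^ 2 + ‖x 1‖ ^ 2) := by
  rw [EuclideanSpace.norm_eq]
  simp [Fin.sum_univ_two]

lemma norm_aux2 (w z : ℂ) :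
    ‖(WithLp.equiv 2 (Fin 2 → ℂ)).symm ![w, z]‖ =
      Real.sqrt (‖w‖ ^ 2 + ‖z‖ ^ 2) := by
  rw [norm_aux]; simp

set_option maxHeartbeats 1000000 in
set_option synthInstance.maxHeartbeats 400000 in
lemma key (a b : ℂ) :
    ‖Matrix.toEuclideanCLM (𝕜 := ℂ) (!![a, b; 0, a])‖ =
      ‖b‖ / 2 +
        Real.sqrt (‖a‖ ^ 2 + ‖b‖ ^ 2 / 4) := by
  set α := ‖a‖ with hα
  set β := ‖b‖ with hβ
  have hα0 : 0 ≤ α := norm_nonneg a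
  have hβ0 : 0 ≤ β := norm_nonneg b
  set q := Real.sqrt (α ^ 2 + β ^ 2 / 4) with hqdef
  have hq0 : 0 ≤ q := Real.sqrt_nonneg _
  have hq2 : q ^ 2 = α ^ 2 + β ^ 2 / 4 := Real.sq_sqrt (by positivity)
  set s := β / 2 + q with hsdef
  have hs0 : 0 ≤ s := by rw [hsdef]; positivity
  have hαq : α ≤ q := by nlinarith [sq_nonneg (q - α)]
  have hs2 : s ^ 2 = α ^ 2 + β * s := by rw [hsdef]; nlinarith
  apply le_antisymm
  · apply ContinuousLinearMap.opNorm_le_bound _ hs0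
    intro x
    rw [← (WithLp.equiv 2 (Fin 2 → ℂ)).symm_apply_apply x]
    set y := WithLp.equiv 2 (Fin 2 → ℂ) x
    rw [apply_aux, norm_aux2, norm_aux]
    set u := ‖y 0‖ with hu
    set v := ‖y 1‖ with hv
    have hu0 : 0 ≤ u := norm_nonneg _
    have hv0 : 0 ≤ v := norm_nonneg _
    have htri : ‖a * y 0 + b * y 1‖ ≤ α * u + β * v := by
      calc ‖a * y 0 + b * y 1‖
          ≤ ‖a * y 0‖ + ‖b * y 1‖ := norm_add_le _ _
        _ = α * u + β * v := by rw [norm_mul, norm_mul]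
    have h1 : ‖a * y 0 + b * y 1‖ ^ 2 ≤ (α * u + β * v) ^ 2 := by
      have := norm_nonneg (a * y 0 + b * y 1)
      nlinarith
    have h2 : ‖a * y 1‖ ^ 2 = α ^ 2 * v ^ 2 := by
      rw [norm_mul]; ring
    have h3 : s * (s ^ 2 * (u ^ 2 + v ^ 2) - ((α * u + β * v) ^ 2 + α ^ 2 * v ^ 2)) =
        β * (s * u - α * v) ^ 2 := by
      linear_combination (s * u ^ 2 + s * v ^ 2 + β * v ^ 2) * hs2
    have hcore : (α * u + β * v) ^ 2 + α ^ 2 * v ^ 2 ≤ s ^ 2 * (u ^ 2 + v ^ 2) := by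
      rcases eq_or_lt_of_le hs0 with hse | hsp
      · have hβz : β = 0 := by rw [hsdef] at hse; linarith
        have hαz : α = 0 := by
          have : q = 0 := by rw [hsdef] at hse; linarith
          linarith [hαq]
        have hqz : q = 0 := by nlinarith
        rw [hβz, hαz, hsdef, hβz, hqz]; norm_num
      · nlinarith [mul_nonneg hβ0 (sq_nonneg (s * u - α * v)), h3, hsp]
    calc Real.sqrt (‖a * y 0 + b * y 1‖ ^ 2 + ‖a * y 1‖ ^ 2)
        ≤ Real.sqrt (s ^ 2 * (u ^ 2 + v ^ 2)) := by
          apply Real.sqrt_le_sqrt; rw [h2]; linarith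
      _ = s * Real.sqrt (u ^ 2 + v ^ 2) := by
          rw [Real.sqrt_mul (sq_nonneg s), Real.sqrt_sq hs0]
  · rcases eq_or_lt_of_le hβ0 with hb0 | hb0
    · -- β = 0, so b = 0
      have hb : b = 0 := by rwa [eq_comm, norm_eq_zero] at hb0
      have hM : (!![a, b; 0, a] : Matrix (Fin 2) (Fin 2) ℂ) = a • 1 := by
        subst hb
        ext i j
        fin_cases i <;> fin_cases j <;> simp [Matrix.one_apply]
      rw [hM, _root_.map_smul, map_one]
      rw [norm_smul a (1 : EuclideanSpace ℂ (Fin 2) →L[ℂ] EuclideanSpace ℂ (Fin 2))]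
      rw [norm_one, mul_one, ← hα]
      have hq' : q = α := by rw [hqdef, ← hb0]; simp [Real.sqrt_sq hα0]
      rw [hsdef, hq', ← hb0]
      norm_num
    · -- β > 0
      have hs1 : 0 < s := by rw [hsdef]; nlinarith
      set y : Fin 2 → ℂ := ![(starRingEnd ℂ) a * b, ((β * s : ℝ) : ℂ)] with hy
      set x := (WithLp.equiv 2 (Fin 2 → ℂ)).symm y with hx
      have hy0 : ‖y 0‖ = α * β := by
        simp [hy, norm_mul, hα, hβ]
      have hy1 : ‖y 1‖ = β * s := by
        rw [hy]
        simp only [Matrix.cons_val_one, Matrix.head_cons, Matrix.cons_val_zero, Complex.norm_real, Real.norm_eq_abs]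
        exact abs_of_nonneg (mul_nonneg hβ0 hs0)
      have hxnorm : ‖x‖ = Real.sqrt (α ^ 2 * β ^ 2 + β ^ 2 * s ^ 2) := by
        rw [hx, norm_aux, hy0, hy1]; congr 1; ring
      have hTx := apply_aux a b y
      rw [← hx] at hTx
      have habs0 : ‖a * y 0 + b * y 1‖ = β * s ^ 2 := by
        have he : a * y 0 + b * y 1 = b * ((α ^ 2 + β * s : ℝ) : ℂ) := by
          simp only [hy, Matrix.cons_val_zero, Matrix.cons_val_one, Matrix.head_cons]
          rw [← mul_assoc, Complex.mul_conj, ← Complex.sq_norm]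
          rw [hα]
          push_cast
          ring
        rw [he, norm_mul, Complex.norm_real, ← hβ, Real.norm_eq_abs,
          abs_of_nonneg (by positivity : (0:ℝ) ≤ α ^ 2 + β * s)]
        rw [hs2]
      have habs1 : ‖a * y 1‖ = α * (β * s) := by
        rw [norm_mul, hy1, ← hα]
      have hTxnorm : ‖Matrix.toEuclideanCLM (𝕜 := ℂ) (!![a, b; 0, a]) x‖ =
          s * Real.sqrt (α ^ 2 * β ^ 2 + β ^ 2 * s ^ 2) := by
        rw [hTx, norm_aux2, habs0, habs1,
          show (β * s ^ 2) ^ 2 + (α * (β * s)) ^ 2 = s ^ 2 * (α ^ 2 * β ^ 2 + β ^ 2 * s ^ 2) by ring,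
          Real.sqrt_mul (sq_nonneg s), Real.sqrt_sq hs0]
      have hxpos : 0 < ‖x‖ := by
        rw [hxnorm]
        apply Real.sqrt_pos.2
        nlinarith [mul_pos (pow_pos hb0 2) (pow_pos hs1 2), sq_nonneg (α * β)]
      have hle := (Matrix.toEuclideanCLM (𝕜 := ℂ) (!![a, b; 0, a])).le_opNorm x
      rw [hTxnorm, hxnorm] at hle
      rw [← hxnorm] at hle
      exact le_of_mul_le_mul_right (by linarith) hxpos


/-- Let `A = [[0,1],[0,0]]` act on `ℂ²` with the Euclidean norm.  Then
(i) for `|λ| = r > 0`, `‖(λI − A)⁻¹‖ = 1/(2r²) + √(1 + 1/(4r²))/r`; and (ii) for `t ≥ 0`,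
`‖e^{At}‖ = t/2 + √(1 + t²/4)`. -/
theorem stmt_14 (A : Matrix (Fin 2) (Fin 2) ℂ) (hA : A = !![0, 1; 0, 0]) :
    (∀ lam : ℂ, ∀ r : ℝ, ‖lam‖ = r → 0 < r →
      ‖Matrix.toEuclideanCLM (𝕜 := ℂ) ((lam • (1 : Matrix (Fin 2) (Fin 2) ℂ) - A)⁻¹)‖ =
        1 / (2 * r ^ 2) + Real.sqrt (1 + 1 / (4 * r ^ 2)) / r) ∧
    (∀ t : ℝ, 0 ≤ t →
      ‖Matrix.toEuclideanCLM (𝕜 := ℂ) (NormedSpace.exp ((t : ℂ) • A))‖ =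
        t / 2 + Real.sqrt (1 + t ^ 2 / 4)) := by
  subst hA
  constructor
  · intro lam r hr hrpos
    have hlam : lam ≠ 0 := by
      intro h
      rw [h, norm_zero] at hr
      linarith
    rw [inv_aux lam hlam, key lam⁻¹ (lam⁻¹ ^ 2)]
    have h1 : ‖lam⁻¹‖ = r⁻¹ := by rw [norm_inv, hr]
    have h2 : ‖lam⁻¹ ^ 2‖ = r⁻¹ ^ 2 := by rw [norm_pow, h1]
    rw [h1, h2]
    have hsq : (r⁻¹) ^ 2 + (r⁻¹ ^ 2) ^ 2 / 4 = (1 + 1 / (4 * r ^ 2)) * (1 / r) ^ 2 := by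
      field_simp
    rw [hsq, Real.sqrt_mul (by positivity), Real.sqrt_sq (by positivity), mul_one_div]
    congr 1
    field_simp
  · intro t ht
    have hsq : ((t : ℂ) • !![0, 1; 0, 0] : Matrix (Fin 2) (Fin 2) ℂ) ^ 2 = 0 := by
      have h0 : (!![0, 1; 0, 0] : Matrix (Fin 2) (Fin 2) ℂ) ^ 2 = 0 := by
        ext i j
        fin_cases i <;> fin_cases j <;>
          simp [pow_two, Matrix.mul_apply, Fin.sum_univ_two]
      rw [smul_pow, h0, smul_zero]
    rw [exp_aux _ hsq]
    have h1 : (1 : Matrix (Fin 2) (Fin 2) ℂ) + (t : ℂ) • !![0, 1; 0, 0] =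
        !![1, (t : ℂ); 0, 1] := by
      ext i j
      fin_cases i <;> fin_cases j <;> simp [Matrix.one_apply]
    rw [h1, key 1 (t : ℂ), norm_one, one_pow, Complex.norm_real, Real.norm_eq_abs, abs_of_nonneg ht]
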